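/- Let N ≥ 3, μ > 0, ω > 0 and α ≠ 0. If there exist ε ∈ {-1,+1}^N and a ≥ 0 such that the N-tuple with components φ_{ω, ε_i a} satisfies the δ vertex condition of strength α, then ω > α²/N². -/

import Mathlib

open Real MeasureTheory

/-- `sech y = 1 / cosh y`. -/
noncomputable def sech (y : ℝ) : ℝ := 1 / Real.cosh y

/-- The half-line soliton profile `φ_{ω,a}(x) = [(μ+1)ω]^{1/(2μ)} sech^{1/μ}(μ√ω (x-a))`. -/
noncomputable def solProfile (μ ω a : ℝ) (x : ℝ) : ℝ :=
  ((μ + 1) * ω) ^ (1 / (2 * μ)) * sech (μ * Real.sqrt ω * (x - a)) ^ (1 / μ)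

/-- let `N ≥ 3`, `μ > 0`, `ω > 0`, `α ≠ 0`. If some tuple of soliton profiles
`(φ_{ω, ε_i a})_i` with `ε ∈ {-1,1}^N`, `a ≥ 0` satisfies the `δ` vertex condition of strength
`α`, then `ω > α²/N²` (lower bound on the allowed frequencies). -/
lemma solProfile_hasDerivAt (μ ω a : ℝ) (hμ : 0 < μ) :
    HasDerivAt (solProfile μ ω a)
      (Real.sqrt ω * Real.tanh (μ * Real.sqrt ω * a) * solProfile μ ω a 0) 0 := by
  set c := μ * Real.sqrt ω with hc
  set C := ((μ + 1) * ω) ^ (1 / (2 * μ)) with hC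
  have h1 : HasDerivAt (fun x : ℝ => Real.cosh (c * (x - a)))
      (Real.sinh (c * (0 - a)) * (c * 1)) 0 :=
    HasDerivAt.cosh (((hasDerivAt_id (0:ℝ)).sub_const a).const_mul c)
  have hcp : Real.cosh (c * (0 - a)) ≠ 0 := (Real.cosh_pos _).ne'
  have h2 := h1.inv hcp
  have h3 := h2.rpow_const (p := 1/μ) (Or.inl (inv_ne_zero hcp))
  have h4 := h3.const_mul C
  have hfun : solProfile μ ω a = fun x => C * (Real.cosh (c * (x - a)))⁻¹ ^ (1 / μ) := by
    funext x
    simp [solProfile, sech, one_div, hC, hc]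
  have key : C *
      (-(Real.sinh (c * (0 - a)) * (c * 1)) / Real.cosh (c * (0 - a)) ^ 2 * (1 / μ) *
        (Real.cosh (c * (0 - a)))⁻¹ ^ (1 / μ - 1))
      = Real.sqrt ω * Real.tanh (c * a) * solProfile μ ω a 0 := by
    have hpos : (0:ℝ) < (Real.cosh (c * (0 - a)))⁻¹ := inv_pos.mpr (Real.cosh_pos _)
    have hsub : (Real.cosh (c * (0 - a)))⁻¹ ^ (1 / μ - 1)
        = (Real.cosh (c * (0 - a)))⁻¹ ^ (1 / μ) / (Real.cosh (c * (0 - a)))⁻¹ := by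
      rw [Real.rpow_sub hpos, Real.rpow_one]
    rw [hsub]
    simp only [solProfile, sech, Real.tanh_eq_sinh_div_cosh, one_div, ← hC, ← hc]
    rw [show c * (0 - a) = -(c * a) by ring, Real.cosh_neg, Real.sinh_neg]
    have hch : Real.cosh (c * a) ≠ 0 := (Real.cosh_pos _).ne'
    field_simp
    rw [hc]
    rw [hC]; ring_nf
  have h5 : HasDerivAt (solProfile μ ω a)
      (C * (-(Real.sinh (c * (0 - a)) * (c * 1)) / Real.cosh (c * (0 - a)) ^ 2 * (1 / μ) *
        (Real.cosh (c * (0 - a)))⁻¹ ^ (1 / μ - 1))) 0 := by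
    rw [hfun]; exact h4
  rwa [key] at h5

lemma tanh_sq_lt_one (x : ℝ) : Real.tanh x ^ 2 < 1 := by
  have h := Real.cosh_sq_sub_sinh_sq x
  have hc := Real.cosh_pos x
  rw [Real.tanh_eq_sinh_div_cosh, div_pow, div_lt_one (by positivity)]
  nlinarith

lemma solProfile_neg_zero (μ ω a : ℝ) : solProfile μ ω (-a) 0 = solProfile μ ω a 0 := by
  simp only [solProfile, sech]
  rw [show μ * Real.sqrt ω * (0 - -a) = -(μ * Real.sqrt ω * (0 - a)) by ring, Real.cosh_neg]

lemma solProfile_pos (μ ω a : ℝ) (hμ : 0 < μ) (hω : 0 < ω) : 0 < solProfile μ ω a 0 := by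
  have h1 : (0:ℝ) < (μ + 1) * ω := by positivity
  have h2 : (0:ℝ) < sech (μ * Real.sqrt ω * (0 - a)) := by
    simp only [sech]; positivity
  exact mul_pos (Real.rpow_pos_of_pos h1 _) (Real.rpow_pos_of_pos h2 _)

theorem frequency_lower_bound (N : ℕ) (hN : 3 ≤ N) (μ ω α : ℝ)
    (hμ : 0 < μ) (hω : 0 < ω) (hα : α ≠ 0)
    (h : ∃ (ε : Fin N → ℝ) (a : ℝ), (∀ i, ε i = 1 ∨ ε i = -1) ∧ 0 ≤ a ∧
      (∀ i j : Fin N, solProfile μ ω (ε i * a) 0 = solProfile μ ω (ε j * a) 0) ∧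
      (∑ i : Fin N, deriv (solProfile μ ω (ε i * a)) 0)
        = α * solProfile μ ω (ε ⟨0, by omega⟩ * a) 0) :
    α ^ 2 / (N : ℝ) ^ 2 < ω := by
  obtain ⟨ε, a, hε, ha, _, hsum⟩ := h
  set c := μ * Real.sqrt ω with hc
  set K := solProfile μ ω a 0 with hK
  set T := Real.tanh (c * a) with hT
  have hKpos : 0 < K := solProfile_pos μ ω a hμ hω
  have hKe : ∀ i, solProfile μ ω (ε i * a) 0 = K := by
    intro i
    rcases hε i with he | he <;> rw [he]
    · rw [one_mul]
    · rw [show (-1 : ℝ) * a = -a by ring, solProfile_neg_zero]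
  have hderiv : ∀ i, deriv (solProfile μ ω (ε i * a)) 0 = Real.sqrt ω * (ε i * T) * K := by
    intro i
    rw [(solProfile_hasDerivAt μ ω (ε i * a) hμ).deriv, hKe i]
    rcases hε i with he | he <;> rw [he]
    · rw [one_mul, one_mul, ← hc, ← hT]
    · rw [show c * (-1 * a) = -(c * a) by ring, Real.tanh_neg, ← hT]; ring
  rw [Finset.sum_congr rfl (fun i _ => hderiv i), hKe] at hsum
  set S := ∑ i : Fin N, ε i with hS
  have hsum1 : ∑ i : Fin N, Real.sqrt ω * (ε i * T) * K = Real.sqrt ω * T * S * K := by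
    simp only [hS, Finset.mul_sum, Finset.sum_mul]
    exact Finset.sum_congr rfl fun i _ => by ring
  have hsum2 : Real.sqrt ω * T * S * K = α * K := by rw [← hsum1, hsum]
  have hαeq : α = Real.sqrt ω * T * S := (mul_right_cancel₀ hKpos.ne' hsum2).symm
  have hSne : S ≠ 0 := by
    intro h0
    apply hα
    rw [hαeq, h0, mul_zero]
  have hT2 : T ^ 2 < 1 := _root_.tanh_sq_lt_one _
  have hSabs : |S| ≤ (N : ℝ) := by
    have habs : ∀ i ∈ (Finset.univ : Finset (Fin N)), |ε i| = (1:ℝ) := by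
      intro i _; rcases hε i with he | he <;> simp [he]
    calc |S| ≤ ∑ i : Fin N, |ε i| := Finset.abs_sum_le_sum_abs _ _
    _ = (N : ℝ) := by rw [Finset.sum_congr rfl habs]; simp
  have hS2 : S ^ 2 ≤ (N : ℝ) ^ 2 := by
    calc S ^ 2 = |S| ^ 2 := (sq_abs S).symm
    _ ≤ (N : ℝ) ^ 2 := pow_le_pow_left₀ (abs_nonneg _) hSabs 2
  have hS2pos : 0 < S ^ 2 := by positivity
  have hα2 : α ^ 2 = ω * (T ^ 2 * S ^ 2) := by
    rw [hαeq]
    rw [show (Real.sqrt ω * T * S) ^ 2 = Real.sqrt ω ^ 2 * (T ^ 2 * S ^ 2) by ring,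
      Real.sq_sqrt hω.le]
  have hNpos : (0:ℝ) < (N : ℝ) ^ 2 := by positivity
  rw [div_lt_iff₀ hNpos]
  have h1 : T ^ 2 * S ^ 2 < S ^ 2 := by nlinarith
  have h2 : ω * (T ^ 2 * S ^ 2) < ω * S ^ 2 := mul_lt_mul_of_pos_left h1 hω
  have h3 : ω * S ^ 2 ≤ ω * (N : ℝ) ^ 2 := mul_le_mul_of_nonneg_left hS2 hω.le
  linarith
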